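/- For any graph G, the Edge-compelling chromatic number of G is at least χ(G) and at most χ(G) + 2, provided G has at least one edge. -/
import Mathlib

open SimpleGraph

/-- A proper coloring of `G` with `k` colors. -/
def ProperColoring {V : Type*} {k : ℕ} (G : SimpleGraph V) (c : V → Fin k) : Prop :=
  ∀ ⦃u v : V⦄, G.Adj u v → c u ≠ c v

/-- `f` selects a rainbow committee of the coloring `c`: one vertex of each color. -/
def IsRainbow {V : Type*} {k : ℕ} (c : V → Fin k) (f : Fin k → V) : Prop :=
  ∀ i : Fin k, c (f i) = i

/-- The coloring `c` compels property `P`: every rainbow committee has property `P`. -/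
def Compels {V : Type*} {k : ℕ} (c : V → Fin k) (P : Set V → Prop) : Prop :=
  ∀ f : Fin k → V, IsRainbow c f → P (Set.range f)

/-- The `P`-compelling chromatic number of `G`: the least number of colors in a proper
coloring, using every color, in which every rainbow committee has property `P`. -/
noncomputable def compellingChromNum {V : Type*} (G : SimpleGraph V) (P : Set V → Prop) : ℕ :=
  sInf {k : ℕ | ∃ c : V → Fin k,
    ProperColoring G c ∧ Function.Surjective c ∧ Compels c P}

/-- Property `Edge`: the set contains at least one edge of `G`. -/
def HasEdge {V : Type*} (G : SimpleGraph V) (S : Set V) : Prop :=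
  ∃ u ∈ S, ∃ v ∈ S, G.Adj u v

/-- The Edge-compelling chromatic number. -/
noncomputable def edgeCompellingChromNum {V : Type*} (G : SimpleGraph V) : ℕ :=
  compellingChromNum G (HasEdge G)

section Aux

variable {V : Type*} {G : SimpleGraph V}

/-- `x` is the unique vertex of its color class. -/
def SingClass {k : ℕ} (c : V → Fin k) (x : V) : Prop := ∀ w, c w = c x → w = x

lemma key_compels {k : ℕ} {c : V → Fin k} {u v : V} (huv : G.Adj u v)
    (hu : SingClass c u) (hv : SingClass c v) : Compels c (HasEdge G) := by
  intro f hf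
  exact ⟨u, ⟨c u, hu _ (hf (c u))⟩, v, ⟨c v, hv _ (hf (c v))⟩, huv⟩

lemma step {n : ℕ} {c : V → Fin n} (hp : ProperColoring G c) (hs : Function.Surjective c)
    {x : V} (hx : ¬ SingClass c x) :
    ∃ c' : V → Fin (n+1), ProperColoring G c' ∧ Function.Surjective c' ∧ SingClass c' x ∧
      ∀ y, c y ≠ c x → (SingClass c y ↔ SingClass c' y) := by
  classical
  have hlast : ∀ w : Fin n, w.castSucc ≠ Fin.last n := fun w => (Fin.castSucc_lt_last w).ne
  refine ⟨fun w => if w = x then Fin.last n else (c w).castSucc, ?_, ?_, ?_, ?_⟩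
  · intro a b hab h
    simp only at h
    by_cases ha : a = x <;> by_cases hb : b = x
    · exact G.ne_of_adj hab (ha.trans hb.symm)
    · rw [if_pos ha, if_neg hb] at h; exact hlast _ h.symm
    · rw [if_neg ha, if_pos hb] at h; exact hlast _ h
    · rw [if_neg ha, if_neg hb] at h; exact hp hab (Fin.castSucc_injective n h)
  · intro i
    rcases Fin.eq_castSucc_or_eq_last i with ⟨j, rfl⟩ | rfl
    · by_cases hj : j = c x
      · obtain ⟨w, hw1, hw2⟩ : ∃ w, c w = c x ∧ w ≠ x := by
          by_contra h
          push_neg at h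
          exact hx fun w hw => h w hw
        exact ⟨w, by simp [hw2, hw1, hj]⟩
      · obtain ⟨w, hw⟩ := hs j
        have hwx : w ≠ x := fun h => hj (by rw [← hw, h])
        exact ⟨w, by simp [hwx, hw]⟩
    · exact ⟨x, by simp⟩
  · intro w hw
    by_contra hne
    have hw' : (if w = x then Fin.last n else (c w).castSucc)
        = (if x = x then Fin.last n else (c x).castSucc) := hw
    rw [if_neg hne, if_pos rfl] at hw'
    exact hlast _ hw' 
  · intro y hy
    have hyx : y ≠ x := fun h => hy (h ▸ rfl)
    constructor
    · intro hsy w hw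
      simp only at hw
      by_cases hwx : w = x
      · rw [if_pos hwx, if_neg hyx] at hw
        exact absurd hw.symm (hlast _)
      · rw [if_neg hwx, if_neg hyx] at hw
        exact hsy w (Fin.castSucc_injective n hw)
    · intro hsy w hw
      have hwx : w ≠ x := fun h => hy (by rw [← hw, h])
      exact hsy w (by simp [hwx, hyx, hw])

lemma compress : ∀ n : ℕ, ∀ c : V → Fin n, ProperColoring G c →
    ∃ m, m ≤ n ∧ ∃ c' : V → Fin m, ProperColoring G c' ∧ Function.Surjective c' := by
  intro n
  induction n with
  | zero =>
    intro c hc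
    exact ⟨0, le_refl _, c, hc, fun i => i.elim0⟩
  | succ n ih =>
    intro c hc
    by_cases hs : Function.Surjective c
    · exact ⟨n + 1, le_refl _, c, hc, hs⟩
    · obtain ⟨i, hi⟩ : ∃ i, ∀ w, c w ≠ i := by
        by_contra h
        push_neg at h
        exact hs fun i => h i
      set σ := Equiv.swap i (Fin.last n) with hσ
      have hne : ∀ w, σ (c w) ≠ Fin.last n := by
        intro w h
        apply hi w
        apply σ.injective
        rw [h, hσ, Equiv.swap_apply_left]
      have hlt : ∀ w, σ (c w) < Fin.last n := fun w => (Fin.lt_last_iff_ne_last).2 (hne w)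
      set c₂ : V → Fin n := fun w => (σ (c w)).castPred (hne w) with hc₂
      have hp₂ : ProperColoring G c₂ := by
        intro a b hab h
        apply hc hab
        apply σ.injective
        have : ((σ (c a)).castPred (hne a) : Fin n) = (σ (c b)).castPred (hne b) := h
        exact Fin.castPred_inj.mp this
      obtain ⟨m, hm, c', h1, h2⟩ := ih c₂ hp₂
      exact ⟨m, hm.trans (Nat.le_succ n), c', h1, h2⟩

end Aux

/-- For a graph with at least one edge, the Edge-compelling chromatic number is at least
`χ(G)` and at most `χ(G) + 2`. -/
theorem edgeCompellingChromNum_bounds {V : Type*} [Fintype V] (G : SimpleGraph V)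
    (hedge : ∃ u v : V, G.Adj u v) :
    G.chromaticNumber ≤ (edgeCompellingChromNum G : ℕ∞) ∧
      (edgeCompellingChromNum G : ℕ∞) ≤ G.chromaticNumber + 2 := by
  classical
  obtain ⟨u, v, huv⟩ := hedge
  set S := {k : ℕ | ∃ c : V → Fin k,
    ProperColoring G c ∧ Function.Surjective c ∧ Compels c (HasEdge G)} with hS
  have hχcol : G.Colorable (ENat.toNat G.chromaticNumber) :=
    G.colorable_chromaticNumber_of_fintype
  obtain ⟨C⟩ := hχcol
  have hCp : ProperColoring G (C : V → Fin _) := fun a b hab => C.valid hab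
  obtain ⟨m, hm, c, hp, hs⟩ := compress _ _ hCp
  have hmem : ∃ k ∈ S, k ≤ m + 2 := by
    by_cases hu : SingClass c u
    · by_cases hv : SingClass c v
      · exact ⟨m, ⟨c, hp, hs, key_compels huv hu hv⟩, by omega⟩
      · obtain ⟨c', hp', hs', hv', hpres⟩ := step hp hs hv
        have hu' : SingClass c' u := (hpres u (hp huv)).mp hu
        exact ⟨m + 1, ⟨c', hp', hs', key_compels huv hu' hv'⟩, by omega⟩
    · by_cases hv : SingClass c v
      · obtain ⟨c', hp', hs', hu', hpres⟩ := step hp hs hu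
        have hv' : SingClass c' v := (hpres v (hp huv.symm)).mp hv
        exact ⟨m + 1, ⟨c', hp', hs', key_compels huv hu' hv'⟩, by omega⟩
      · obtain ⟨c', hp', hs', hv', hpres⟩ := step hp hs hv
        have hu' : ¬ SingClass c' u := fun h => hu ((hpres u (hp huv)).mpr h)
        obtain ⟨c'', hp'', hs'', hu'', hpres'⟩ := step hp' hs' hu'
        have hv'' : SingClass c'' v := (hpres' v (hp' huv.symm)).mp hv'
        exact ⟨m + 2, ⟨c'', hp'', hs'', key_compels huv hu'' hv''⟩, by omega⟩
  obtain ⟨k, hkS, hk2⟩ := hmem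
  have hSne : S.Nonempty := ⟨k, hkS⟩
  have hInf_mem : sInf S ∈ S := Nat.sInf_mem hSne
  have hInf_le : sInf S ≤ k := Nat.sInf_le hkS
  have hdef : edgeCompellingChromNum G = sInf S := rfl
  obtain ⟨c₀, hp₀, hs₀, -⟩ := hInf_mem
  have hcol : G.Colorable (sInf S) :=
    ⟨SimpleGraph.Coloring.mk c₀ fun {a b} hab => hp₀ hab⟩
  have hχne : G.chromaticNumber ≠ ⊤ :=
    chromaticNumber_ne_top_iff_exists.mpr ⟨_, G.colorable_of_fintype⟩
  have hχeq : (ENat.toNat G.chromaticNumber : ℕ∞) = G.chromaticNumber :=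
    ENat.coe_toNat hχne
  constructor
  · rw [hdef]; exact hcol.chromaticNumber_le
  · rw [hdef]
    calc ((sInf S : ℕ) : ℕ∞) ≤ ((m + 2 : ℕ) : ℕ∞) := by exact_mod_cast hInf_le.trans hk2
      _ ≤ ((ENat.toNat G.chromaticNumber + 2 : ℕ) : ℕ∞) := by
          exact_mod_cast Nat.add_le_add_right hm 2
      _ = G.chromaticNumber + 2 := by push_cast [hχeq]; rfl
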